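/- Let m ≥ 1 and let A, B, C be m×m matrices over F₂ such that the digital net generated by (A, B, C) is a (0,m,3)-net over F₂. Let a_i, b_i, c_i denote the i-th rows of A, B, C respectively, and for integers i, j ≥ 0 with i+j ≤ m−1 let V_{i,j} be the F₂-subspace of F₂^m spanned by a_1,…,a_i, b_1,…,b_{m−i−j−1}, c_1,…,c_j. Then for every 0 ≤ j ≤ m−1, the set ⋂_{i=0}^{m−j−1} (F₂^m \ V_{i,j}) has exactly 2^j elements. -/

import Mathlib

open Matrix

/-- The vector of binary digits of `l` (least significant first). -/
def digitsVec (m l : ℕ) : Fin m → ZMod 2 := fun k => if l.testBit k.val then 1 else 0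

/-- The map φ sending a bit vector to a real number in [0,1). -/
noncomputable def phiMap (m : ℕ) (y : Fin m → ZMod 2) : ℝ :=
  ∑ k : Fin m, ((y k).val : ℝ) / 2 ^ (k.val + 1)

/-- The digital net (as a multiset of `2^m` points in `[0,1)^s`) generated by
matrices `C 0, …, C (s-1)`. -/
noncomputable def digitalNet (m s : ℕ) (C : Fin s → Matrix (Fin m) (Fin m) (ZMod 2)) :
    Multiset (Fin s → ℝ) :=
  (Multiset.range (2 ^ m)).map fun l => fun j => phiMap m ((C j).mulVec (digitsVec m l))

open Classical in
/-- `P` is a `(t,m,s)`-net over `F₂`: every elementary interval of volume `2^{t-m}`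
contains exactly `2^t` points of `P`, counted with multiplicity. -/
def IsNet (t m s : ℕ) (P : Multiset (Fin s → ℝ)) : Prop :=
  ∀ d : Fin s → ℕ, (∑ i, d i) = m - t →
    ∀ a : Fin s → ℕ, (∀ i, a i < 2 ^ d i) →
      (P.countP fun x => ∀ i,
        ((a i : ℝ) / 2 ^ d i ≤ x i ∧ x i < ((a i : ℝ) + 1) / 2 ^ d i)) = 2 ^ t

/-- The anti-diagonal matrix `J_m` over `F₂`. -/
def Jmat (m : ℕ) : Matrix (Fin m) (Fin m) (ZMod 2) :=
  Matrix.of fun i j => if i.val + j.val = m - 1 then 1 else 0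

/-- The upper-triangular Pascal matrix `P_m` over `F₂` (0-indexed entry `(i,j)` is
`binom(j,i) mod 2`). -/
def Pmat (m : ℕ) : Matrix (Fin m) (Fin m) (ZMod 2) :=
  Matrix.of fun i j => ((j.val.choose i.val : ℕ) : ZMod 2)

/-- A matrix is lower triangular. -/
def IsLowerTri {m : ℕ} (L : Matrix (Fin m) (Fin m) (ZMod 2)) : Prop :=
  ∀ i j : Fin m, i < j → L i j = 0

/-- The set consisting of the first `n` rows of `M`. -/
def rowSet {m : ℕ} (M : Matrix (Fin m) (Fin m) (ZMod 2)) (n : ℕ) :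
    Set (Fin m → ZMod 2) :=
  {x | ∃ r : Fin m, r.val < n ∧ x = M r}

/-- The subspace `V_{i,j}` spanned by the first `i` rows of `A`, the first
`m−i−j−1` rows of `B` and the first `j` rows of `C`. -/
def Vsub {m : ℕ} (A B C : Matrix (Fin m) (Fin m) (ZMod 2)) (i j : ℕ) :
    Submodule (ZMod 2) (Fin m → ZMod 2) :=
  Submodule.span (ZMod 2) (rowSet A i ∪ rowSet B (m - i - j - 1) ∪ rowSet C j)

namespace Net14

/-! ### Elementary binary arithmetic -/

lemma sum_bits_testBit : ∀ (t : ℕ) (f : ℕ → ℕ) (n : ℕ), (∀ k, f k ≤ 1) → t < n →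
    (∑ k ∈ Finset.range n, f k * 2 ^ k).testBit t = decide (f t = 1) := by
  intro t
  induction t with
  | zero =>
    intro f n hf ht
    obtain ⟨n', rfl⟩ : ∃ n', n = n' + 1 := ⟨n - 1, by omega⟩
    rw [Finset.sum_range_succ']
    have h2 : ∑ k ∈ Finset.range n', f (k + 1) * 2 ^ (k + 1)
        = 2 * ∑ k ∈ Finset.range n', f (k + 1) * 2 ^ k := by
      rw [Finset.mul_sum]; exact Finset.sum_congr rfl fun k _ => by ring
    rw [h2, Nat.testBit_zero]
    have hf0 := hf 0
    have h3 : (2 * (∑ k ∈ Finset.range n', f (k + 1) * 2 ^ k) + f 0 * 2 ^ 0) % 2 = f 0 := by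
      simp only [pow_zero, mul_one]; omega
    rw [h3]
  | succ t ih =>
    intro f n hf ht
    obtain ⟨n', rfl⟩ : ∃ n', n = n' + 1 := ⟨n - 1, by omega⟩
    rw [Finset.sum_range_succ']
    have h2 : ∑ k ∈ Finset.range n', f (k + 1) * 2 ^ (k + 1)
        = 2 * ∑ k ∈ Finset.range n', f (k + 1) * 2 ^ k := by
      rw [Finset.mul_sum]; exact Finset.sum_congr rfl fun k _ => by ring
    rw [h2, Nat.testBit_add_one]
    have hf0 := hf 0
    have h3 : (2 * (∑ k ∈ Finset.range n', f (k + 1) * 2 ^ k) + f 0 * 2 ^ 0) / 2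
        = ∑ k ∈ Finset.range n', f (k + 1) * 2 ^ k := by
      simp only [pow_zero, mul_one]; omega
    rw [h3]
    exact ih (fun k => f (k + 1)) n' (fun k => hf (k + 1)) (by omega)

lemma sum_bits_lt (f : ℕ → ℕ) (hf : ∀ k, f k ≤ 1) (n : ℕ) :
    (∑ k ∈ Finset.range n, f k * 2 ^ k) < 2 ^ n := by
  induction n with
  | zero => simp
  | succ n ih =>
    rw [Finset.sum_range_succ, pow_succ]
    have h4 : f n * 2 ^ n ≤ 1 * 2 ^ n := Nat.mul_le_mul_right _ (hf n)
    omega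

/-- bits of `y` as a function on `ℕ`. -/
def bitf (m : ℕ) (y : Fin m → ZMod 2) : ℕ → ℕ :=
  fun k => if h : k < m then (y ⟨k, h⟩).val else 0

lemma bitf_le_one (m : ℕ) (y : Fin m → ZMod 2) (k : ℕ) : bitf m y k ≤ 1 := by
  unfold bitf
  split
  · have := ZMod.val_lt (y ⟨k, by omega⟩); omega
  · omega

/-- encoding a bit vector as a natural number. -/
def encode (m : ℕ) (y : Fin m → ZMod 2) : ℕ := ∑ k ∈ Finset.range m, bitf m y k * 2 ^ k

lemma encode_lt (m : ℕ) (y : Fin m → ZMod 2) : encode m y < 2 ^ m :=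
  sum_bits_lt _ (bitf_le_one m y) m

lemma zmod2_cases : ∀ z : ZMod 2, z = 0 ∨ z = 1 := by decide

lemma decode_encode (m : ℕ) (y : Fin m → ZMod 2) : digitsVec m (encode m y) = y := by
  funext k
  unfold digitsVec
  rw [encode, sum_bits_testBit k.val (bitf m y) m (bitf_le_one m y) k.isLt]
  have hb : bitf m y k.val = (y k).val := by
    unfold bitf; rw [dif_pos k.isLt]
  rcases zmod2_cases (y k) with h | h <;> simp [hb, h, ZMod.val_one]

lemma digitsVec_zero (m : ℕ) : digitsVec m 0 = 0 := by
  funext k; simp [digitsVec]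

/-- big-endian truncation of the first `d` bits. -/
def trunc (m d : ℕ) (y : Fin m → ZMod 2) : ℕ :=
  ∑ k ∈ Finset.range d, bitf m y k * 2 ^ (d - 1 - k)

lemma trunc_eq_zero (m d : ℕ) (hd : d ≤ m) (y : Fin m → ZMod 2)
    (h : ∀ k : Fin m, k.val < d → y k = 0) : trunc m d y = 0 := by
  unfold trunc
  refine Finset.sum_eq_zero fun k hk => ?_
  rw [Finset.mem_range] at hk
  have hkm : k < m := by omega
  unfold bitf
  rw [dif_pos hkm, h ⟨k, hkm⟩ hk]
  simp

/-! ### The interval membership criterion -/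

lemma geom_tail (d : ℕ) : ∀ n, d ≤ n →
    (∑ k ∈ Finset.Ico d n, (1 : ℝ) / 2 ^ (k + 1)) = 1 / 2 ^ d - 1 / 2 ^ n := by
  intro n
  induction n with
  | zero => intro h; simp_all
  | succ n ih =>
    intro h
    rcases Nat.lt_or_ge d (n + 1) with h' | h'
    · have hdn : d ≤ n := by omega
      rw [Finset.sum_Ico_succ_top hdn, ih hdn]
      have : (2 : ℝ) ^ (n + 1) = 2 ^ n * 2 := by ring
      field_simp
      ring
    · have : d = n + 1 := by omega
      subst this
      simp

lemma phiMap_eq (m : ℕ) (y : Fin m → ZMod 2) :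
    phiMap m y = ∑ k ∈ Finset.range m, (bitf m y k : ℝ) / 2 ^ (k + 1) := by
  rw [phiMap]
  have h1 : ∀ k : Fin m, ((y k).val : ℝ) / 2 ^ (k.val + 1)
      = (bitf m y k.val : ℝ) / 2 ^ (k.val + 1) := by
    intro k
    have : bitf m y k.val = (y k).val := by simp [bitf, dif_pos k.isLt]
    rw [this]
  rw [Finset.sum_congr rfl fun k _ => h1 k,
    Fin.sum_univ_eq_sum_range (fun k => (bitf m y k : ℝ) / 2 ^ (k + 1))]

lemma interval_iff (m d : ℕ) (hd : d ≤ m) (y : Fin m → ZMod 2) (a : ℕ) :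
    ((a : ℝ) / 2 ^ d ≤ phiMap m y ∧ phiMap m y < ((a : ℝ) + 1) / 2 ^ d) ↔ trunc m d y = a := by
  set r : ℝ := ∑ k ∈ Finset.Ico d m, (bitf m y k : ℝ) / 2 ^ (k + 1) with hr
  have hsplit : phiMap m y = (trunc m d y : ℝ) / 2 ^ d + r := by
    rw [phiMap_eq, Finset.range_eq_Ico, ← Finset.sum_Ico_consecutive _ (Nat.zero_le d) hd]
    congr 1
    rw [trunc, Nat.cast_sum, Finset.sum_div, ← Finset.range_eq_Ico]
    refine Finset.sum_congr rfl fun k hk => ?_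
    rw [Finset.mem_range] at hk
    push_cast
    rw [div_eq_div_iff (by positivity) (by positivity), mul_comm ((bitf m y k : ℝ)) _,
      mul_assoc, ← pow_add]
    have : d - 1 - k + (k + 1) = d := by omega
    rw [this]
    ring
  have hr0 : 0 ≤ r := Finset.sum_nonneg fun k _ => by positivity
  have hrlt : r < 1 / 2 ^ d := by
    have h1 : r ≤ ∑ k ∈ Finset.Ico d m, (1 : ℝ) / 2 ^ (k + 1) := by
      refine Finset.sum_le_sum fun k _ => ?_
      have h2 : (bitf m y k : ℝ) ≤ 1 := by exact_mod_cast bitf_le_one m y k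
      gcongr
    rw [geom_tail d m hd] at h1
    have : (0 : ℝ) < 1 / 2 ^ m := by positivity
    linarith
  constructor
  · rintro ⟨hlo, hhi⟩
    rw [hsplit] at hlo hhi
    have hpos : (0 : ℝ) < 2 ^ d := by positivity
    have e1 : (a : ℝ) ≤ trunc m d y + r * 2 ^ d := by
      rw [div_le_iff₀ hpos] at hlo
      calc (a : ℝ) ≤ ((trunc m d y : ℝ) / 2 ^ d + r) * 2 ^ d := hlo
        _ = trunc m d y + r * 2 ^ d := by field_simp
    have e2 : (trunc m d y : ℝ) + r * 2 ^ d < a + 1 := by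
      rw [lt_div_iff₀ hpos] at hhi
      calc (trunc m d y : ℝ) + r * 2 ^ d = ((trunc m d y : ℝ) / 2 ^ d + r) * 2 ^ d := by
            field_simp
        _ < a + 1 := hhi
    have e3 : (0 : ℝ) ≤ r * 2 ^ d := by positivity
    have e4 : r * 2 ^ d < 1 := by
      calc r * 2 ^ d < (1 / 2 ^ d) * 2 ^ d := by gcongr
        _ = 1 := by field_simp
    have c1 : (a : ℝ) < trunc m d y + 1 := by linarith
    have c2 : (trunc m d y : ℝ) < a + 1 := by linarith
    have c1' : a < trunc m d y + 1 := by exact_mod_cast c1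
    have c2' : trunc m d y < a + 1 := by exact_mod_cast c2
    omega
  · rintro rfl
    constructor
    · rw [hsplit]
      have : (0 : ℝ) ≤ r := hr0
      linarith
    · rw [hsplit]
      have hpos : (0 : ℝ) < 2 ^ d := by positivity
      have h5 : r < ((trunc m d y : ℝ) + 1) / 2 ^ d - (trunc m d y : ℝ) / 2 ^ d := by
        have : ((trunc m d y : ℝ) + 1) / 2 ^ d - (trunc m d y : ℝ) / 2 ^ d = 1 / 2 ^ d := by
          field_simp
          ring
        rw [this]; exact hrlt
      linarith

/-! ### The kernel property extracted from the net property -/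

lemma net_inj (m : ℕ) (A B C : Matrix (Fin m) (Fin m) (ZMod 2))
    (hnet : IsNet 0 m 3 (digitalNet m 3 ![A, B, C]))
    (d1 d2 d3 : ℕ) (hd : d1 + d2 + d3 = m) (w : Fin m → ZMod 2)
    (h1 : ∀ k : Fin m, k.val < d1 → A.mulVec w k = 0)
    (h2 : ∀ k : Fin m, k.val < d2 → B.mulVec w k = 0)
    (h3 : ∀ k : Fin m, k.val < d3 → C.mulVec w k = 0) : w = 0 := by
  classical
  have hd1 : d1 ≤ m := by omega
  have hd2 : d2 ≤ m := by omega
  have hd3 : d3 ≤ m := by omega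
  have hcount := hnet ![d1, d2, d3] (by simp [Fin.sum_univ_three]; omega) ![0, 0, 0]
    (by intro i; fin_cases i <;> simp [Nat.pow_pos])
  rw [digitalNet, Multiset.countP_map] at hcount
  -- the predicate, as a function of `l`
  set p : ℕ → Prop := fun l => ∀ i : Fin 3,
      ((![(0:ℕ), 0, 0] i : ℝ) / 2 ^ (![d1, d2, d3] i) ≤
        phiMap m ((![A, B, C] i).mulVec (digitsVec m l)) ∧
       phiMap m ((![A, B, C] i).mulVec (digitsVec m l)) <
        ((![(0:ℕ), 0, 0] i : ℝ) + 1) / 2 ^ (![d1, d2, d3] i)) with hp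
  have key : ∀ l : ℕ, (∀ i : Fin 3,
      trunc m (![d1, d2, d3] i) ((![A, B, C] i).mulVec (digitsVec m l)) = 0) → p l := by
    intro l hl i
    have hdi : (![d1, d2, d3] i : ℕ) ≤ m := by fin_cases i <;> assumption
    have := (interval_iff m (![d1, d2, d3] i) hdi
      ((![A, B, C] i).mulVec (digitsVec m l)) 0).mpr (hl i)
    have hz : (![(0:ℕ), 0, 0] i) = 0 := by fin_cases i <;> rfl
    rw [hz]
    exact this
  have mem0 : p 0 := by
    apply key
    intro i
    rw [digitsVec_zero, Matrix.mulVec_zero]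
    exact trunc_eq_zero m _ (by fin_cases i <;> assumption) 0 (fun _ _ => rfl)
  have memw : p (encode m w) := by
    apply key
    intro i
    rw [decode_encode]
    refine trunc_eq_zero m _ (by fin_cases i <;> assumption) _ (fun k hk => ?_)
    fin_cases i
    · exact h1 k hk
    · exact h2 k hk
    · exact h3 k hk
  -- conclude `encode m w = 0`
  have hfilter : (Multiset.card ((Multiset.range (2 ^ m)).filter p)) = 1 := by
    simpa [hp] using hcount
  obtain ⟨x, hx⟩ := Multiset.card_eq_one.mp hfilter
  have m0 : (0 : ℕ) ∈ (Multiset.range (2 ^ m)).filter p :=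
    Multiset.mem_filter.mpr ⟨Multiset.mem_range.mpr (by positivity), mem0⟩
  have mw : encode m w ∈ (Multiset.range (2 ^ m)).filter p :=
    Multiset.mem_filter.mpr ⟨Multiset.mem_range.mpr (encode_lt m w), memw⟩
  rw [hx, Multiset.mem_singleton] at m0 mw
  have : encode m w = 0 := by omega
  calc w = digitsVec m (encode m w) := (decode_encode m w).symm
    _ = digitsVec m 0 := by rw [this]
    _ = 0 := digitsVec_zero m

/-! ### The row families -/

/-- the `n`-th row of `M` (as a total function of `n : ℕ`). -/
def Arow (m : ℕ) (M : Matrix (Fin m) (Fin m) (ZMod 2)) (n : ℕ) : Fin m → ZMod 2 :=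
  if h : n < m then M ⟨n, h⟩ else 0

/-- the family listing the first `d1` rows of `A`, then `d2` rows of `B`, then rows of `C`. -/
def gfam (m : ℕ) (A B C : Matrix (Fin m) (Fin m) (ZMod 2)) (d1 d2 : ℕ) :
    Fin m → (Fin m → ZMod 2) :=
  fun r => if r.val < d1 then Arow m A r.val
    else if r.val < d1 + d2 then Arow m B (r.val - d1)
    else Arow m C (r.val - d1 - d2)

lemma gfam_linearIndependent (m : ℕ) (A B C : Matrix (Fin m) (Fin m) (ZMod 2))
    (hnet : IsNet 0 m 3 (digitalNet m 3 ![A, B, C]))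
    (d1 d2 d3 : ℕ) (hd : d1 + d2 + d3 = m) :
    LinearIndependent (ZMod 2) (gfam m A B C d1 d2) := by
  set S : Matrix (Fin m) (Fin m) (ZMod 2) := Matrix.of (gfam m A B C d1 d2) with hS
  have hker : ∀ w, S.mulVec w = 0 → w = 0 := by
    intro w hw
    have hrow : ∀ r : Fin m, gfam m A B C d1 d2 r ⬝ᵥ w = 0 := by
      intro r
      have := congrFun hw r
      simpa [Matrix.mulVec, hS] using this
    apply net_inj m A B C hnet d1 d2 d3 hd w
    · intro k hk
      have hgr : gfam m A B C d1 d2 ⟨k.val, k.isLt⟩ = A k := by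
        unfold gfam Arow
        rw [if_pos hk, dif_pos k.isLt]
      have := hrow ⟨k.val, k.isLt⟩
      rw [hgr] at this
      simpa [Matrix.mulVec] using this
    · intro k hk
      have hlt : d1 + k.val < m := by omega
      have hval : (⟨d1 + k.val, hlt⟩ : Fin m).val = d1 + k.val := rfl
      have hgr : gfam m A B C d1 d2 ⟨d1 + k.val, hlt⟩ = B k := by
        unfold gfam Arow
        rw [if_neg (by omega), if_pos (by omega)]
        have : (⟨d1 + k.val, hlt⟩ : Fin m).val - d1 = k.val := by omega
        rw [this, dif_pos k.isLt]
      have := hrow ⟨d1 + k.val, hlt⟩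
      rw [hgr] at this
      simpa [Matrix.mulVec] using this
    · intro k hk
      have hlt : d1 + d2 + k.val < m := by omega
      have hval : (⟨d1 + d2 + k.val, hlt⟩ : Fin m).val = d1 + d2 + k.val := rfl
      have hgr : gfam m A B C d1 d2 ⟨d1 + d2 + k.val, hlt⟩ = C k := by
        unfold gfam Arow
        rw [if_neg (by omega), if_neg (by omega)]
        have : (⟨d1 + d2 + k.val, hlt⟩ : Fin m).val - d1 - d2 = k.val := by omega
        rw [this, dif_pos k.isLt]
      have := hrow ⟨d1 + d2 + k.val, hlt⟩
      rw [hgr] at this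
      simpa [Matrix.mulVec] using this
  have hinj : Function.Injective S.mulVec := by
    intro u v huv
    have hsub : S.mulVec (u - v) = 0 := by
      rw [Matrix.mulVec_sub, huv, sub_self]
    have := hker _ hsub
    exact sub_eq_zero.mp this
  have hunit : IsUnit S := Matrix.mulVec_injective_iff_isUnit.mp hinj
  have := Matrix.linearIndependent_rows_iff_isUnit.mpr hunit
  exact this

lemma exists_gbasis (m : ℕ) (hm : 1 ≤ m) (A B C : Matrix (Fin m) (Fin m) (ZMod 2))
    (hnet : IsNet 0 m 3 (digitalNet m 3 ![A, B, C]))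
    (d1 d2 d3 : ℕ) (hd : d1 + d2 + d3 = m) :
    ∃ b : Module.Basis (Fin m) (ZMod 2) (Fin m → ZMod 2), ⇑b = gfam m A B C d1 d2 := by
  haveI : Nonempty (Fin m) := ⟨⟨0, hm⟩⟩
  exact ⟨basisOfLinearIndependentOfCardEqFinrank
      (gfam_linearIndependent m A B C hnet d1 d2 d3 hd)
      (by simp [Module.finrank_fintype_fun_eq_card]),
    coe_basisOfLinearIndependentOfCardEqFinrank _ _⟩

/-! ### Row sets as images of the families -/

lemma rowSet_zero {m : ℕ} (M : Matrix (Fin m) (Fin m) (ZMod 2)) : rowSet M 0 = ∅ := by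
  ext x; simp [rowSet]

lemma gfam_image (m : ℕ) (A B C : Matrix (Fin m) (Fin m) (ZMod 2)) (d1 d2 d3 : ℕ)
    (hd : d1 + d2 + d3 = m) (n1 n2 n3 : ℕ) (h1 : n1 ≤ d1) (h2 : n2 ≤ d2) (h3 : n3 ≤ d3) :
    gfam m A B C d1 d2 '' {r : Fin m | r.val < n1 ∨ (d1 ≤ r.val ∧ r.val < d1 + n2) ∨
        (d1 + d2 ≤ r.val ∧ r.val < d1 + d2 + n3)}
      = rowSet A n1 ∪ rowSet B n2 ∪ rowSet C n3 := by
  ext x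
  constructor
  · rintro ⟨r, hr, rfl⟩
    rcases hr with hr | ⟨hr1, hr2⟩ | ⟨hr1, hr2⟩
    · left; left
      refine ⟨r, hr, ?_⟩
      unfold gfam Arow
      rw [if_pos (by omega), dif_pos r.isLt]
    · left; right
      have hlt : r.val - d1 < m := by omega
      have hval : (⟨r.val - d1, hlt⟩ : Fin m).val = r.val - d1 := rfl
      refine ⟨⟨r.val - d1, hlt⟩, by omega, ?_⟩
      unfold gfam Arow
      rw [if_neg (by omega), if_pos (by omega), dif_pos hlt]
    · right
      have hlt : r.val - d1 - d2 < m := by omega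
      have hval : (⟨r.val - d1 - d2, hlt⟩ : Fin m).val = r.val - d1 - d2 := rfl
      refine ⟨⟨r.val - d1 - d2, hlt⟩, by omega, ?_⟩
      unfold gfam Arow
      rw [if_neg (by omega), if_neg (by omega), dif_pos hlt]
  · rintro ((⟨rr, hrr, rfl⟩ | ⟨rr, hrr, rfl⟩) | ⟨rr, hrr, rfl⟩)
    · have hval : (⟨rr.val, rr.isLt⟩ : Fin m).val = rr.val := rfl
      refine ⟨⟨rr.val, rr.isLt⟩, Or.inl (by omega), ?_⟩
      unfold gfam Arow
      rw [if_pos (by omega), dif_pos rr.isLt]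
    · have hlt : d1 + rr.val < m := by omega
      have hval : (⟨d1 + rr.val, hlt⟩ : Fin m).val = d1 + rr.val := rfl
      refine ⟨⟨d1 + rr.val, hlt⟩, Or.inr (Or.inl ⟨by omega, by omega⟩), ?_⟩
      unfold gfam Arow
      rw [if_neg (by omega), if_pos (by omega)]
      have : (⟨d1 + rr.val, hlt⟩ : Fin m).val - d1 = rr.val := by omega
      rw [this, dif_pos rr.isLt]
    · have hlt : d1 + d2 + rr.val < m := by omega
      have hval : (⟨d1 + d2 + rr.val, hlt⟩ : Fin m).val = d1 + d2 + rr.val := rfl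
      refine ⟨⟨d1 + d2 + rr.val, hlt⟩, Or.inr (Or.inr ⟨by omega, by omega⟩), ?_⟩
      unfold gfam Arow
      rw [if_neg (by omega), if_neg (by omega)]
      have : (⟨d1 + d2 + rr.val, hlt⟩ : Fin m).val - d1 - d2 = rr.val := by omega
      rw [this, dif_pos rr.isLt]

/-! ### Generic linear algebra lemmas -/

lemma span_image_inter {K V ι : Type*} [Field K] [AddCommGroup V] [Module K V] {v : ι → V}
    (hv : LinearIndependent K v) (s t : Set ι) :
    Submodule.span K (v '' s) ⊓ Submodule.span K (v '' t)
      = Submodule.span K (v '' (s ∩ t)) := by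
  apply le_antisymm
  · rintro x hx
    rw [Submodule.mem_inf] at hx
    obtain ⟨hxs, hxt⟩ := hx
    have hs : s = (s ∩ t) ∪ (s \ t) := by
      ext i; constructor
      · intro hi; by_cases hit : i ∈ t
        · exact Or.inl ⟨hi, hit⟩
        · exact Or.inr ⟨hi, hit⟩
      · rintro (⟨hi, _⟩ | ⟨hi, _⟩) <;> exact hi
    rw [hs, Set.image_union, Submodule.span_union] at hxs
    obtain ⟨y, hy, z, hz, hyz⟩ := Submodule.mem_sup.mp hxs
    have hzt : z ∈ Submodule.span K (v '' t) := by
      have hy' : y ∈ Submodule.span K (v '' t) :=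
        Submodule.span_mono (Set.image_mono Set.inter_subset_right) hy
      have : z = x - y := by rw [← hyz]; abel
      rw [this]
      exact Submodule.sub_mem _ hxt hy'
    have hdisj : Disjoint (Submodule.span K (v '' (s \ t))) (Submodule.span K (v '' t)) :=
      hv.disjoint_span_image Set.disjoint_sdiff_left
    have hz0 : z = 0 := by
      have := hdisj.le_bot (Submodule.mem_inf.mpr ⟨hz, hzt⟩)
      simpa using this
    rw [← hyz, hz0, add_zero]
    exact hy
  · exact le_inf
      (Submodule.span_mono (Set.image_mono Set.inter_subset_left))
      (Submodule.span_mono (Set.image_mono Set.inter_subset_right))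

lemma coord_zero_iff {K V ι : Type*} [Field K] [AddCommGroup V] [Module K V] [Fintype ι]
    (b : Module.Basis ι K V) (i₀ : ι) (x : V) :
    x ∈ Submodule.span K (⇑b '' {i₀}ᶜ) ↔ b.repr x i₀ = 0 := by
  constructor
  · intro hx
    have hle : Submodule.span K (⇑b '' {i₀}ᶜ) ≤ LinearMap.ker (b.coord i₀) := by
      rw [Submodule.span_le]
      rintro _ ⟨i, hi, rfl⟩
      have : i ≠ i₀ := hi
      simp [Module.Basis.coord_apply, Module.Basis.repr_self, Finsupp.single_apply, this]
    have := hle hx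
    simpa [Module.Basis.coord_apply] using this
  · intro h
    have hx := b.sum_repr x
    rw [← hx]
    refine Submodule.sum_mem _ fun i _ => ?_
    by_cases hi : i = i₀
    · rw [hi, h, zero_smul]; exact Submodule.zero_mem _
    · exact Submodule.smul_mem _ _ (Submodule.subset_span ⟨i, hi, rfl⟩)

/-! ### The chain of intersections -/

lemma chain (m : ℕ) (hm : 1 ≤ m) (A B C : Matrix (Fin m) (Fin m) (ZMod 2))
    (hnet : IsNet 0 m 3 (digitalNet m 3 ![A, B, C])) (j : ℕ) (hj : j ≤ m - 1) :
    ∀ k, k ≤ m - j - 1 →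
      {x : Fin m → ZMod 2 | ∀ i, i ≤ k → x ∈ Vsub A B C i j}
        = (Submodule.span (ZMod 2) (rowSet B (m - j - 1 - k) ∪ rowSet C j) : Set _) := by
  intro k
  induction k with
  | zero =>
    intro _
    ext x
    simp only [Set.mem_setOf_eq, SetLike.mem_coe]
    constructor
    · intro h
      have := h 0 le_rfl
      rw [Vsub, rowSet_zero] at this
      simpa [Set.empty_union] using this
    · intro h i hi
      have : i = 0 := by omega
      subst this
      rw [Vsub, rowSet_zero]
      simpa [Set.empty_union] using h
  | succ k ih =>
    intro hk1
    have hk : k ≤ m - j - 1 := by omega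
    have hsum : (k + 1) + (m - j - 1 - k) + j = m := by omega
    have hindep := gfam_linearIndependent m A B C hnet (k + 1) (m - j - 1 - k) j hsum
    -- the left side splits off the last constraint
    have hsplit : {x : Fin m → ZMod 2 | ∀ i, i ≤ k + 1 → x ∈ Vsub A B C i j}
        = {x : Fin m → ZMod 2 | ∀ i, i ≤ k → x ∈ Vsub A B C i j} ∩
          (Vsub A B C (k + 1) j : Set _) := by
      ext x
      simp only [Set.mem_setOf_eq, Set.mem_inter_iff, SetLike.mem_coe]
      constructor
      · intro h
        exact ⟨fun i hi => h i (by omega), h (k + 1) le_rfl⟩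
      · rintro ⟨h1, h2⟩ i hi
        rcases Nat.lt_or_ge i (k + 1) with h' | h'
        · exact h1 i (by omega)
        · have : i = k + 1 := by omega
          subst this
          exact h2
    rw [hsplit, ih hk]
    -- express both sides as spans of images
    have him1 : rowSet A 0 ∪ rowSet B (m - j - 1 - k) ∪ rowSet C j
        = gfam m A B C (k + 1) (m - j - 1 - k) '' {r : Fin m | r.val < 0 ∨
            ((k + 1) ≤ r.val ∧ r.val < (k + 1) + (m - j - 1 - k)) ∨
            ((k + 1) + (m - j - 1 - k) ≤ r.val ∧ r.val < (k + 1) + (m - j - 1 - k) + j)} :=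
      (gfam_image m A B C (k + 1) (m - j - 1 - k) j hsum 0 (m - j - 1 - k) j
        (by omega) le_rfl le_rfl).symm
    have him2 : rowSet A (k + 1) ∪ rowSet B (m - (k + 1) - j - 1) ∪ rowSet C j
        = gfam m A B C (k + 1) (m - j - 1 - k) '' {r : Fin m | r.val < k + 1 ∨
            ((k + 1) ≤ r.val ∧ r.val < (k + 1) + (m - (k + 1) - j - 1)) ∨
            ((k + 1) + (m - j - 1 - k) ≤ r.val ∧ r.val < (k + 1) + (m - j - 1 - k) + j)} :=
      (gfam_image m A B C (k + 1) (m - j - 1 - k) j hsum (k + 1) (m - (k + 1) - j - 1) j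
        le_rfl (by omega) le_rfl).symm
    have him3 : rowSet A 0 ∪ rowSet B (m - j - 1 - (k + 1)) ∪ rowSet C j
        = gfam m A B C (k + 1) (m - j - 1 - k) '' {r : Fin m | r.val < 0 ∨
            ((k + 1) ≤ r.val ∧ r.val < (k + 1) + (m - j - 1 - (k + 1))) ∨
            ((k + 1) + (m - j - 1 - k) ≤ r.val ∧ r.val < (k + 1) + (m - j - 1 - k) + j)} :=
      (gfam_image m A B C (k + 1) (m - j - 1 - k) j hsum 0 (m - j - 1 - (k + 1)) j
        (by omega) (by omega) le_rfl).symm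
    have hYk : Submodule.span (ZMod 2) (rowSet B (m - j - 1 - k) ∪ rowSet C j)
        = Submodule.span (ZMod 2) (rowSet A 0 ∪ rowSet B (m - j - 1 - k) ∪ rowSet C j) := by
      rw [rowSet_zero, Set.empty_union]
    have hYk1 : Submodule.span (ZMod 2) (rowSet B (m - j - 1 - (k + 1)) ∪ rowSet C j)
        = Submodule.span (ZMod 2) (rowSet A 0 ∪ rowSet B (m - j - 1 - (k + 1)) ∪ rowSet C j) := by
      rw [rowSet_zero, Set.empty_union]
    rw [hYk, hYk1, him1, him3]
    have hV : Vsub A B C (k + 1) j = Submodule.span (ZMod 2)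
        (gfam m A B C (k + 1) (m - j - 1 - k) '' {r : Fin m | r.val < k + 1 ∨
            ((k + 1) ≤ r.val ∧ r.val < (k + 1) + (m - (k + 1) - j - 1)) ∨
            ((k + 1) + (m - j - 1 - k) ≤ r.val ∧ r.val < (k + 1) + (m - j - 1 - k) + j)}) := by
      rw [Vsub, him2]
    rw [hV]
    have hTT : ({r : Fin m | r.val < 0 ∨
            ((k + 1) ≤ r.val ∧ r.val < (k + 1) + (m - j - 1 - k)) ∨
            ((k + 1) + (m - j - 1 - k) ≤ r.val ∧ r.val < (k + 1) + (m - j - 1 - k) + j)} ∩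
        {r : Fin m | r.val < k + 1 ∨
            ((k + 1) ≤ r.val ∧ r.val < (k + 1) + (m - (k + 1) - j - 1)) ∨
            ((k + 1) + (m - j - 1 - k) ≤ r.val ∧ r.val < (k + 1) + (m - j - 1 - k) + j)})
        = {r : Fin m | r.val < 0 ∨
            ((k + 1) ≤ r.val ∧ r.val < (k + 1) + (m - j - 1 - (k + 1))) ∨
            ((k + 1) + (m - j - 1 - k) ≤ r.val ∧ r.val < (k + 1) + (m - j - 1 - k) + j)} := by
      ext r
      simp only [Set.mem_inter_iff, Set.mem_setOf_eq]
      omega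
    rw [← Submodule.coe_inf, span_image_inter hindep, hTT]

/-! ### rowSet C j as the range of an independent family -/

lemma rowSetC_range (m j : ℕ) (hjm : j ≤ m) (C : Matrix (Fin m) (Fin m) (ZMod 2)) :
    rowSet C j = Set.range (fun t : Fin j => C ⟨t.val, by omega⟩) := by
  ext x
  constructor
  · rintro ⟨r, hr, rfl⟩
    exact ⟨⟨r.val, hr⟩, rfl⟩
  · rintro ⟨t, rfl⟩
    exact ⟨⟨t.val, by omega⟩, t.isLt, rfl⟩

lemma rowSetC_indep (m : ℕ) (A B C : Matrix (Fin m) (Fin m) (ZMod 2))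
    (hnet : IsNet 0 m 3 (digitalNet m 3 ![A, B, C])) (j : ℕ) (hjm : j ≤ m) :
    LinearIndependent (ZMod 2) (fun t : Fin j => C (⟨t.val, by omega⟩ : Fin m)) := by
  have hindep := gfam_linearIndependent m A B C hnet 0 (m - j) j (by omega)
  have hcomp : (fun t : Fin j => C (⟨t.val, by omega⟩ : Fin m))
      = gfam m A B C 0 (m - j) ∘ (fun t : Fin j => (⟨m - j + t.val, by omega⟩ : Fin m)) := by
    funext t
    simp only [Function.comp_apply]
    have hval : ((⟨m - j + t.val, by omega⟩ : Fin m)).val = m - j + t.val := rfl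
    unfold gfam Arow
    rw [if_neg (by omega), if_neg (by omega)]
    have h5 : ((⟨m - j + t.val, by omega⟩ : Fin m)).val - 0 - (m - j) = t.val := by omega
    rw [h5, dif_pos (by omega)]
  rw [hcomp]
  exact hindep.comp _ (fun s t hst => by
    have : m - j + s.val = m - j + t.val := congrArg Fin.val hst
    exact Fin.ext (by omega))

end Net14

open Net14

theorem stmt14 (m : ℕ) (hm : 1 ≤ m) (A B C : Matrix (Fin m) (Fin m) (ZMod 2))
    (hnet : IsNet 0 m 3 (digitalNet m 3 ![A, B, C]))
    (j : ℕ) (hj : j ≤ m - 1) :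
    Set.ncard (⋂ i ∈ Finset.range (m - j), ((Vsub A B C i j : Set (Fin m → ZMod 2))ᶜ))
      = 2 ^ j := by
  classical
  have hm1 : m - 1 < m := by omega
  have hmj : 1 ≤ m - j := by omega
  -- for every `i < m - j`, a basis adapted to `V_i`
  have hbasis : ∀ i : Fin (m - j), ∃ b : Module.Basis (Fin m) (ZMod 2) (Fin m → ZMod 2),
      ⇑b = gfam m A B C i.val (m - i.val - j - 1) :=
    fun i => exists_gbasis m hm A B C hnet i.val (m - i.val - j - 1) (j + 1) (by omega)
  choose b hb using hbasis
  -- `V_i` is the span of the basis vectors other than the last one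
  have hVi : ∀ i : Fin (m - j), (Vsub A B C i.val j : Submodule (ZMod 2) (Fin m → ZMod 2))
      = Submodule.span (ZMod 2) (⇑(b i) '' ({(⟨m - 1, hm1⟩ : Fin m)} : Set (Fin m))ᶜ) := by
    intro i
    have hsum : i.val + (m - i.val - j - 1) + (j + 1) = m := by omega
    have him := gfam_image m A B C i.val (m - i.val - j - 1) (j + 1) hsum
      i.val (m - i.val - j - 1) j le_rfl le_rfl (by omega)
    have hsets : {r : Fin m | r.val < i.val ∨
          (i.val ≤ r.val ∧ r.val < i.val + (m - i.val - j - 1)) ∨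
          (i.val + (m - i.val - j - 1) ≤ r.val ∧
            r.val < i.val + (m - i.val - j - 1) + j)}
        = ({(⟨m - 1, hm1⟩ : Fin m)} : Set (Fin m))ᶜ := by
      ext r
      have hval : ((⟨m - 1, hm1⟩ : Fin m)).val = m - 1 := rfl
      simp only [Set.mem_setOf_eq, Set.mem_compl_iff, Set.mem_singleton_iff, Fin.ext_iff]
      have := r.isLt
      have := i.isLt
      omega
    rw [Vsub, ← him, hsets, hb]
  -- membership criterion
  have hmem : ∀ (i : Fin (m - j)) (x : Fin m → ZMod 2),
      x ∈ Vsub A B C i.val j ↔ (b i).repr x ⟨m - 1, hm1⟩ = 0 := by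
    intro i x
    rw [show (x ∈ Vsub A B C i.val j) ↔ x ∈ (Vsub A B C i.val j :
      Submodule (ZMod 2) (Fin m → ZMod 2)) from Iff.rfl, hVi i]
    exact coord_zero_iff (b i) _ x
  -- the linear map collecting all the coordinates
  set F : (Fin m → ZMod 2) →ₗ[ZMod 2] (Fin (m - j) → ZMod 2) :=
    LinearMap.pi (fun i : Fin (m - j) => (b i).coord ⟨m - 1, hm1⟩) with hF
  -- kernel of F
  have hker : LinearMap.ker F = Submodule.span (ZMod 2) (rowSet C j) := by
    have hchain := chain m hm A B C hnet j hj (m - j - 1) le_rfl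
    ext x
    rw [LinearMap.mem_ker]
    have hFx : F x = 0 ↔ ∀ i : Fin (m - j), (b i).repr x ⟨m - 1, hm1⟩ = 0 := by
      constructor
      · intro h i
        have := congrFun h i
        simpa [hF, LinearMap.pi_apply, Module.Basis.coord_apply] using this
      · intro h
        funext i
        simpa [hF, LinearMap.pi_apply, Module.Basis.coord_apply] using h i
    rw [hFx]
    have h1 : (∀ i : Fin (m - j), (b i).repr x ⟨m - 1, hm1⟩ = 0)
        ↔ ∀ i, i ≤ m - j - 1 → x ∈ Vsub A B C i j := by
      constructor
      · intro h i hi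
        have hilt : i < m - j := by omega
        have := (hmem ⟨i, hilt⟩ x).mpr (h ⟨i, hilt⟩)
        exact this
      · intro h i
        exact (hmem i x).mp (h i.val (by omega))
    rw [h1]
    have h2 : x ∈ {x : Fin m → ZMod 2 | ∀ i, i ≤ m - j - 1 → x ∈ Vsub A B C i j}
        ↔ (∀ i, i ≤ m - j - 1 → x ∈ Vsub A B C i j) := Iff.rfl
    rw [← h2, hchain]
    have h3 : m - j - 1 - (m - j - 1) = 0 := by omega
    rw [h3, rowSet_zero, Set.empty_union]
    rfl
  -- the dimension of the kernel
  have hjm : j ≤ m := by omega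
  have hdimker : Module.finrank (ZMod 2) (LinearMap.ker F) = j := by
    rw [hker, rowSetC_range m j hjm C]
    rw [finrank_span_eq_card (rowSetC_indep m A B C hnet j hjm)]
    simp
  -- F is surjective
  have hdim : Module.finrank (ZMod 2) (Fin m → ZMod 2) = m := by
    simp [Module.finrank_fintype_fun_eq_card]
  have hrange : LinearMap.range F = ⊤ := by
    apply Submodule.eq_top_of_finrank_eq
    have hrn := LinearMap.finrank_range_add_finrank_ker F
    rw [hdimker, hdim] at hrn
    have hcod : Module.finrank (ZMod 2) (Fin (m - j) → ZMod 2) = m - j := by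
      simp [Module.finrank_fintype_fun_eq_card]
    rw [hcod]
    omega
  obtain ⟨x₀, hx₀⟩ : ∃ x₀, F x₀ = fun _ => 1 := by
    have : (fun _ => 1 : Fin (m - j) → ZMod 2) ∈ LinearMap.range F := by
      rw [hrange]; trivial
    exact this
  -- the intersection is a coset of the kernel
  have hset : (⋂ i ∈ Finset.range (m - j), ((Vsub A B C i j : Set (Fin m → ZMod 2))ᶜ))
      = (fun k => x₀ + k) '' (LinearMap.ker F : Set (Fin m → ZMod 2)) := by
    ext x
    simp only [Set.mem_iInter, Finset.mem_range, Set.mem_compl_iff, SetLike.mem_coe,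
      Set.mem_image]
    constructor
    · intro h
      have hall : ∀ i : Fin (m - j), (b i).repr x ⟨m - 1, hm1⟩ = 1 := by
        intro i
        have hnot := h i.val i.isLt
        rw [hmem i x] at hnot
        rcases zmod2_cases ((b i).repr x ⟨m - 1, hm1⟩) with h0 | h0
        · exact absurd h0 hnot
        · exact h0
      have hFx : F x = fun _ => 1 := by
        funext i
        simpa [hF, LinearMap.pi_apply, Module.Basis.coord_apply] using hall i
      refine ⟨x - x₀, ?_, by abel⟩
      rw [LinearMap.mem_ker, map_sub, hFx, hx₀, sub_self]
    · rintro ⟨k, hk, rfl⟩ i hi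
      rw [LinearMap.mem_ker] at hk
      have hFx : F (x₀ + k) = fun _ => 1 := by
        rw [map_add, hk, add_zero, hx₀]
      rw [hmem ⟨i, hi⟩ (x₀ + k)]
      have : (b ⟨i, hi⟩).repr (x₀ + k) ⟨m - 1, hm1⟩ = 1 := by
        have := congrFun hFx ⟨i, hi⟩
        simpa [hF, LinearMap.pi_apply, Module.Basis.coord_apply] using this
      rw [this]
      exact one_ne_zero
  rw [hset]
  rw [Set.ncard_image_of_injective _ (add_right_injective x₀)]
  -- cardinality of the kernel
  haveI : Module.Finite (ZMod 2) (LinearMap.ker F) := Module.Finite.of_finite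
  haveI : Fintype (LinearMap.ker F) := Fintype.ofFinite _
  have hc1 : Set.ncard (LinearMap.ker F : Set (Fin m → ZMod 2))
      = Nat.card (LinearMap.ker F) := by
    rw [← Nat.card_coe_set_eq]
    rfl
  rw [hc1, Nat.card_eq_fintype_card]
  rw [Module.card_eq_pow_finrank (K := ZMod 2) (V := LinearMap.ker F), hdimker]
  simp
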